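/- There exists an absolute constant c > 0 such that for every sum-bucket game on a graph with n ≥ 2 vertices, every Nash-routing p, and every routing p* (with C̄* = C̄(p*), D̄* = D̄(p*)), the social cost satisfies C̄(p) + D̄(p) ≤ c · C̄* · D̄* · ⌈log₂ n⌉². Equivalently, the price of anarchy of sum-bucket games is O((C̄*·D̄*/(C̄*+D̄*))·log² n). -/

import Mathlib

open Finset

/-- A routing game: a finite set of players `Fin N`, a graph `G` on the finite
vertex type `V`, and for each player a nonempty finite strategy set of paths
(trails of length at least 1) joining its source to its destination. -/
structure RoutingGame (V : Type) [Fintype V] [DecidableEq V] where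
  /-- the underlying graph -/
  G : SimpleGraph V
  /-- the number of players -/
  N : ℕ
  Npos : 0 < N
  /-- the source of each player -/
  src : Fin N → V
  /-- the destination of each player -/
  dst : Fin N → V
  src_ne_dst : ∀ i, src i ≠ dst i
  /-- the strategy set of each player -/
  strat : ∀ i : Fin N, Finset (G.Walk (src i) (dst i))
  strat_nonempty : ∀ i, (strat i).Nonempty
  strat_trail : ∀ i, ∀ q ∈ strat i, q.IsTrail
  strat_len : ∀ i, ∀ q ∈ strat i, 1 ≤ q.length

namespace RoutingGame

variable {V : Type} [Fintype V] [DecidableEq V] (R : RoutingGame V)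

/-- A routing assigns to each player a walk from its source to its destination. -/
abbrev Routing := ∀ i : Fin R.N, R.G.Walk (R.src i) (R.dst i)

/-- `p` is a valid routing if every player's path belongs to its strategy set. -/
def IsRouting (p : R.Routing) : Prop := ∀ i, p i ∈ R.strat i

/-- The edge congestion `C_e(p)`: the number of players whose path uses `e`. -/
def edgeCong (p : R.Routing) (e : Sym2 V) : ℕ :=
  (Finset.univ.filter fun i => e ∈ (p i).edges).card

/-- The path congestion `C_i(p)` of player `i`. -/
def pathCong (p : R.Routing) (i : Fin R.N) : ℕ :=
  (p i).edges.toFinset.sup (R.edgeCong p)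

/-- The network congestion `C(p)`. -/
def netCong (p : R.Routing) : ℕ :=
  Finset.univ.sup (R.edgeCong p)

/-- The maximum path length `D(p)`. -/
def maxLen (p : R.Routing) : ℕ :=
  Finset.univ.sup fun i => (p i).length

/-- The longest path length `L` over all strategy sets. -/
def Lmax : ℕ :=
  Finset.univ.sup fun i : Fin R.N => (R.strat i).sup fun q => q.length

/-- Player cost in the sum game: `pc_i(p) = C_i(p) + D_i(p)`. -/
def pcSum (p : R.Routing) (i : Fin R.N) : ℕ :=
  R.pathCong p i + (p i).length

/-- For a bucket index `b`, the number of players whose path uses edge `e`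
and belongs to bucket `b` (the bucket of a path `q` is `⌊log₂ |q|⌋`). -/
def nCongB (p : R.Routing) (b : ℕ) (e : Sym2 V) : ℕ :=
  (Finset.univ.filter fun j => e ∈ (p j).edges ∧ Nat.log 2 (p j).length = b).card

/-- The normalized congestion `C̄_i(p)` of player `i`: the maximum, over the
edges of `p_i`, of the congestion caused by paths in the bucket of `p_i`. -/
def nCong (p : R.Routing) (i : Fin R.N) : ℕ :=
  (p i).edges.toFinset.sup (R.nCongB p (Nat.log 2 (p i).length))

/-- The normalized length `D̄_i(p) = 2 ^ (B(p_i) + 1) - 1` of player `i`. -/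
def nLen (p : R.Routing) (i : Fin R.N) : ℕ :=
  2 ^ (Nat.log 2 (p i).length + 1) - 1

/-- Player cost in the sum-bucket game: `pc_i(p) = C̄_i(p) + D̄_i(p)`. -/
def pcSB (p : R.Routing) (i : Fin R.N) : ℕ := R.nCong p i + R.nLen p i

/-- The normalized congestion `C̄(p)` of a routing. -/
def nC (p : R.Routing) : ℕ := Finset.univ.sup (R.nCong p)

/-- The normalized length `D̄(p)` of a routing. -/
def nD (p : R.Routing) : ℕ := Finset.univ.sup (R.nLen p)

/-- The normalized edge congestion `C̄_e(p) = max_i C̄_{e,p_i}(p)`. -/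
def nCe (p : R.Routing) (e : Sym2 V) : ℕ :=
  Finset.univ.sup fun i => R.nCongB p (Nat.log 2 (p i).length) e

/-- Social cost in the sum-bucket game: `SC(p) = C̄(p) + D̄(p)`. -/
def SCSB (p : R.Routing) : ℕ := R.nC p + R.nD p

/-- A Nash-routing of the sum-bucket game: a routing in which every player is
locally optimal. -/
def NashSB (p : R.Routing) : Prop :=
  R.IsRouting p ∧
    ∀ i, ∀ q ∈ R.strat i, R.pcSB p i ≤ R.pcSB (Function.update p i q) i

/-- A greedy move in the sum-bucket game takes `p` to `p'` by letting a single
player switch to a strictly cheaper path in its strategy set. -/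
def GreedyMoveSB (p p' : R.Routing) : Prop :=
  ∃ i, ∃ q ∈ R.strat i,
    p' = Function.update p i q ∧ R.pcSB p' i < R.pcSB p i

/-- The entry `m_j(p)` of the routing vector of the sum-bucket game: the number
of players whose cost equals `j`. -/
def mvecSB (p : R.Routing) (j : ℕ) : ℕ :=
  (Finset.univ.filter fun i => R.pcSB p i = j).card

/-- The strict order on routing vectors (sum-bucket game): `M(p') < M(p)` iff
the vectors agree above some index `j` and the entry of `p'` at `j` is smaller. -/
def MLtSB (p' p : R.Routing) : Prop :=
  ∃ j : ℕ, (∀ k, j < k → R.mvecSB p' k = R.mvecSB p k) ∧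
    R.mvecSB p' j < R.mvecSB p j

-- ### auxiliary lemmas

lemma exists_edge_mem {u v : V} (q : R.G.Walk u v) (h1 : 1 ≤ q.length) :
    ∃ e, e ∈ q.edges := by
  apply List.exists_mem_of_length_pos
  rw [SimpleGraph.Walk.length_edges]
  omega

lemma nCongB_le_nCong (p : R.Routing) {e : Sym2 V} {j : Fin R.N}
    (hej : e ∈ (p j).edges) :
    R.nCongB p (Nat.log 2 (p j).length) e ≤ R.nCong p j :=
  Finset.le_sup (List.mem_toFinset.mpr hej)

lemma nCongB_le_nC (p : R.Routing) (b : ℕ) (e : Sym2 V) :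
    R.nCongB p b e ≤ R.nC p := by
  rcases Nat.eq_zero_or_pos (R.nCongB p b e) with h | h
  · rw [h]; exact Nat.zero_le _
  · obtain ⟨j, hj⟩ := Finset.card_pos.mp h
    simp only [Finset.mem_filter] at hj
    calc R.nCongB p b e = R.nCongB p (Nat.log 2 (p j).length) e := by rw [hj.2.2]
      _ ≤ R.nCong p j := R.nCongB_le_nCong p hj.2.1
      _ ≤ R.nC p := Finset.le_sup (Finset.mem_univ j)

lemma nCongB_update_le (p : R.Routing) (i : Fin R.N) (q : R.G.Walk (R.src i) (R.dst i))
    (b : ℕ) (e : Sym2 V) :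
    R.nCongB (Function.update p i q) b e ≤ R.nCongB p b e + 1 := by
  have hsub : (Finset.univ.filter fun j =>
      e ∈ ((Function.update p i q) j).edges ∧ Nat.log 2 ((Function.update p i q) j).length = b)
      ⊆ insert i (Finset.univ.filter fun j => e ∈ (p j).edges ∧ Nat.log 2 (p j).length = b) := by
    intro j hj
    rcases eq_or_ne j i with rfl | hne
    · exact Finset.mem_insert_self _ _
    · simp only [Finset.mem_filter, Function.update_of_ne hne] at hj
      exact Finset.mem_insert_of_mem (Finset.mem_filter.mpr ⟨Finset.mem_univ _, hj.2⟩)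
  calc R.nCongB (Function.update p i q) b e ≤ _ := Finset.card_le_card hsub
    _ ≤ R.nCongB p b e + 1 := Finset.card_insert_le _ _

lemma nash_bound (p : R.Routing) (hp : R.NashSB p) (i : Fin R.N)
    {q : R.G.Walk (R.src i) (R.dst i)} (hq : q ∈ R.strat i) :
    ∃ e ∈ q.edges, R.pcSB p i ≤
      R.nCongB p (Nat.log 2 q.length) e + 1 + (2 ^ (Nat.log 2 q.length + 1) - 1) := by
  have hlen := R.strat_len i q hq
  have hupd : Function.update p i q i = q := Function.update_self i q p
  have hne : q.edges.toFinset.Nonempty := by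
    obtain ⟨e, he⟩ := R.exists_edge_mem q hlen
    exact ⟨e, List.mem_toFinset.mpr he⟩
  have hcong : R.nCong (Function.update p i q) i
      = q.edges.toFinset.sup (R.nCongB (Function.update p i q) (Nat.log 2 q.length)) := by
    unfold nCong
    rw [hupd]
  obtain ⟨e, he, hesup⟩ := Finset.exists_mem_eq_sup _ hne
      (R.nCongB (Function.update p i q) (Nat.log 2 q.length))
  refine ⟨e, List.mem_toFinset.mp he, ?_⟩
  have h1 := hp.2 i q hq
  have hlenu : R.nLen (Function.update p i q) i = 2 ^ (Nat.log 2 q.length + 1) - 1 := by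
    unfold nLen; rw [hupd]
  have h2 : R.pcSB (Function.update p i q) i
      ≤ R.nCongB p (Nat.log 2 q.length) e + 1 + (2 ^ (Nat.log 2 q.length + 1) - 1) := by
    unfold pcSB
    rw [hlenu, hcong, hesup]
    have h3 := R.nCongB_update_le p i q (Nat.log 2 q.length) e
    omega
  exact h1.trans h2

lemma sym2_card_le (h1 : 1 ≤ Fintype.card V) :
    Fintype.card (Sym2 V) ≤ Fintype.card V * Fintype.card V := by
  rw [Sym2.card, Nat.choose_two_right]
  have h2 : Fintype.card V + 1 - 1 = Fintype.card V := by omega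
  rw [h2]
  calc (Fintype.card V + 1) * Fintype.card V / 2
      ≤ 2 * (Fintype.card V * Fintype.card V) / 2 := by
        apply Nat.div_le_div_right
        nlinarith
    _ = Fintype.card V * Fintype.card V := by omega

lemma bucket_le_of_trail (lam : ℕ) (hlam : Fintype.card V ≤ 2 ^ lam)
    (hn2 : 2 ≤ Fintype.card V) {u v : V} (q : R.G.Walk u v) (hq : q.IsTrail) :
    Nat.log 2 q.length ≤ 2 * lam := by
  have h1 : q.length ≤ 2 ^ (2 * lam) := by
    calc q.length = q.edges.length := (SimpleGraph.Walk.length_edges q).symm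
      _ = q.edges.toFinset.card := (List.toFinset_card_of_nodup hq.edges_nodup).symm
      _ ≤ Fintype.card (Sym2 V) := Finset.card_le_univ _
      _ ≤ Fintype.card V * Fintype.card V := sym2_card_le (by omega)
      _ ≤ 2 ^ lam * 2 ^ lam := Nat.mul_le_mul hlam hlam
      _ = 2 ^ (2 * lam) := by rw [← pow_add]; ring_nf
  calc Nat.log 2 q.length ≤ Nat.log 2 (2 ^ (2 * lam)) := Nat.log_mono_right h1
    _ = 2 * lam := Nat.log_pow one_lt_two (2 * lam)

lemma arith_main (Cs Ds lam k : ℕ) (hCs : 1 ≤ Cs) (hDs : 1 ≤ Ds) (hlam : 1 ≤ lam)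
    (hk : k ≤ 2 * lam) :
    2 * Cs * (2 * lam + 1) * ((k + 1) * (Ds + 2)) + k * (Ds + 2) ≤ 60 * Cs * Ds * lam ^ 2 := by
  have h1 : 2 * lam + 1 ≤ 3 * lam := by omega
  have h2 : k + 1 ≤ 3 * lam := by omega
  have h3 : Ds + 2 ≤ 3 * Ds := by omega
  have h4 : lam * Ds ≤ Cs * Ds * (lam * lam) := by
    calc lam * Ds = Ds * lam := by ring
      _ ≤ Ds * (lam * lam) := Nat.mul_le_mul_left _ (Nat.le_mul_of_pos_left lam hlam)
      _ ≤ Cs * (Ds * (lam * lam)) := Nat.le_mul_of_pos_left _ hCs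
      _ = Cs * Ds * (lam * lam) := by ring
  calc 2 * Cs * (2 * lam + 1) * ((k + 1) * (Ds + 2)) + k * (Ds + 2)
      ≤ 2 * Cs * (3 * lam) * ((3 * lam) * (3 * Ds)) + (2 * lam) * (3 * Ds) := by gcongr
    _ = 54 * (Cs * Ds * (lam * lam)) + 6 * (lam * Ds) := by ring
    _ ≤ 54 * (Cs * Ds * (lam * lam)) + 6 * (Cs * Ds * (lam * lam)) := by gcongr
    _ = 60 * Cs * Ds * lam ^ 2 := by ring


/-- There exists an absolute constant `c > 0` such that for every
sum-bucket game on a graph with `n ≥ 2` vertices, every Nash-routing `p`, and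
every routing `p*`, the social cost satisfies
`C̄(p) + D̄(p) ≤ c · C̄(p*) · D̄(p*) · ⌈log₂ n⌉²`.  Equivalently, the price of
anarchy of sum-bucket games is `O((C̄*·D̄*/(C̄*+D̄*))·log² n)`. -/
theorem sum_bucket_price_of_anarchy :
    ∃ c : ℕ, 0 < c ∧
      ∀ (V : Type) [Fintype V] [DecidableEq V] (R : RoutingGame V)
        (p pstar : R.Routing), 2 ≤ Fintype.card V →
        R.NashSB p → R.IsRouting pstar →
        R.SCSB p ≤ c * R.nC pstar * R.nD pstar *
          (Nat.clog 2 (Fintype.card V)) ^ 2 := by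
  classical
  refine ⟨200, by norm_num, ?_⟩
  intro V _ _ R p pstar hn2 hNash hstar
  set lam := Nat.clog 2 (Fintype.card V) with hlamdef
  have hlam1 : 1 ≤ lam := Nat.clog_pos one_lt_two hn2
  have hnpow : Fintype.card V ≤ 2 ^ lam := Nat.le_pow_clog one_lt_two _
  set Cs := R.nC pstar with hCsdef
  set Ds := R.nD pstar with hDsdef
  set C := R.nC p with hCdef
  have hp0 : ∀ i, p i ∈ R.strat i := hNash.1
  have i0 : Fin R.N := ⟨0, R.Npos⟩
  have hCs1 : 1 ≤ Cs := by
    obtain ⟨e, he⟩ := R.exists_edge_mem (pstar i0) (R.strat_len i0 _ (hstar i0))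
    have h1 : 0 < R.nCongB pstar (Nat.log 2 (pstar i0).length) e :=
      Finset.card_pos.mpr ⟨i0, Finset.mem_filter.mpr ⟨Finset.mem_univ _, he, rfl⟩⟩
    calc 1 ≤ R.nCongB pstar (Nat.log 2 (pstar i0).length) e := h1
      _ ≤ Cs := R.nCongB_le_nC pstar _ _
  have hDs1 : 1 ≤ Ds := by
    have h2 : (2:ℕ) ≤ 2 ^ (Nat.log 2 (pstar i0).length + 1) := by
      calc (2:ℕ) = 2 ^ 1 := (pow_one 2).symm
        _ ≤ 2 ^ (Nat.log 2 (pstar i0).length + 1) := Nat.pow_le_pow_right (by norm_num) (by omega)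
    have h3 : 1 ≤ R.nLen pstar i0 := by unfold RoutingGame.nLen; omega
    calc 1 ≤ R.nLen pstar i0 := h3
      _ ≤ Ds := Finset.le_sup (Finset.mem_univ i0)
  -- Nash consequence for each player
  have hnash_i : ∀ i, ∃ e ∈ (pstar i).edges,
      R.pcSB p i ≤ R.nCongB p (Nat.log 2 (pstar i).length) e + 1 + Ds := by
    intro i
    obtain ⟨e, he, hle⟩ := R.nash_bound p hNash i (hstar i)
    refine ⟨e, he, hle.trans ?_⟩
    have h1 : R.nLen pstar i ≤ Ds := Finset.le_sup (Finset.mem_univ i)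
    have h2 : R.nLen pstar i = 2 ^ (Nat.log 2 (pstar i).length + 1) - 1 := rfl
    omega
  -- length bound
  have hDp : R.nD p ≤ C + 1 + Ds := by
    apply Finset.sup_le
    intro i _
    obtain ⟨e, _, hle⟩ := hnash_i i
    have h1 : R.nLen p i ≤ R.pcSB p i := Nat.le_add_left _ _
    have h2 : R.nCongB p (Nat.log 2 (pstar i).length) e ≤ R.nC p := R.nCongB_le_nC p _ _
    omega
  -- main congestion bound
  have hCb : C ≤ 60 * Cs * Ds * lam ^ 2 := by
    by_contra hcon'
    push_neg at hcon'
    have hcon : 60 * Cs * Ds * lam ^ 2 < C := hcon'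
    have claim : ∀ k, k ≤ 2 * lam + 1 → ∃ b : ℕ, ∃ A : Finset (Sym2 V),
        2 ^ k ≤ A.card ∧ ∀ e ∈ A, C - k * (Ds + 2) ≤ R.nCongB p b e := by
      intro k
      induction k with
      | zero =>
        intro _
        have hNne : (Finset.univ : Finset (Fin R.N)).Nonempty := ⟨i0, Finset.mem_univ _⟩
        obtain ⟨i1, _, hi1⟩ := Finset.exists_mem_eq_sup Finset.univ hNne (R.nCong p)
        have hne : (p i1).edges.toFinset.Nonempty := by
          obtain ⟨e, he⟩ := R.exists_edge_mem (p i1) (R.strat_len i1 _ (hp0 i1))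
          exact ⟨e, List.mem_toFinset.mpr he⟩
        obtain ⟨e0, _, hesup⟩ := Finset.exists_mem_eq_sup _ hne
          (R.nCongB p (Nat.log 2 (p i1).length))
        refine ⟨Nat.log 2 (p i1).length, {e0}, by simp, ?_⟩
        intro e he
        rw [Finset.mem_singleton] at he
        subst he
        have hCe : C = R.nCongB p (Nat.log 2 (p i1).length) e := by
          rw [hCdef]
          unfold RoutingGame.nC
          rw [hi1]
          unfold RoutingGame.nCong
          exact hesup
        omega
      | succ k ih =>
        intro hk1
        have hk : k ≤ 2 * lam := by omega
        obtain ⟨b, A, hcard, hA⟩ := ih (by omega)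
        have hM : 2*Cs*(2*lam+1)*((k+1)*(Ds+2)) + k*(Ds+2) < C :=
          lt_of_le_of_lt (arith_main Cs Ds lam k hCs1 hDs1 hlam1 hk) hcon
        have hW2 : (2:ℕ) ≤ 2 ^ (b+1) := by
          calc (2:ℕ) = 2 ^ 1 := (pow_one 2).symm
            _ ≤ 2 ^ (b+1) := Nat.pow_le_pow_right (by norm_num) (by omega)
        set P := Finset.univ.filter
          (fun j => Nat.log 2 (p j).length = b ∧ ∃ e ∈ A, e ∈ (p j).edges) with hPdef
        have hPcount : (C - k*(Ds+2)) * A.card ≤ P.card * 2^(b+1) := by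
          have h1 : (C - k*(Ds+2)) * A.card ≤ ∑ e ∈ A, R.nCongB p b e := by
            rw [mul_comm]
            calc A.card * (C - k*(Ds+2)) = ∑ _e ∈ A, (C - k*(Ds+2)) := by
                  rw [Finset.sum_const, smul_eq_mul]
              _ ≤ ∑ e ∈ A, R.nCongB p b e := Finset.sum_le_sum hA
          have h2 : ∑ e ∈ A, R.nCongB p b e
              = ∑ j : Fin R.N, ∑ e ∈ A,
                  (if e ∈ (p j).edges ∧ Nat.log 2 (p j).length = b then 1 else 0) := by
            rw [Finset.sum_comm]
            refine Finset.sum_congr rfl fun e _ => ?_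
            rw [RoutingGame.nCongB, Finset.card_filter]
          have h3 : ∀ j ∈ Finset.univ, j ∉ P → (∑ e ∈ A,
              (if e ∈ (p j).edges ∧ Nat.log 2 (p j).length = b then 1 else 0) : ℕ) = 0 := by
            intro j _ hj
            refine Finset.sum_eq_zero fun e he => ?_
            rw [if_neg]
            intro hcond
            exact hj (Finset.mem_filter.mpr ⟨Finset.mem_univ _, hcond.2, e, he, hcond.1⟩)
          have h4 : ∀ j ∈ P, (∑ e ∈ A,
              (if e ∈ (p j).edges ∧ Nat.log 2 (p j).length = b then 1 else 0) : ℕ) ≤ 2^(b+1) := by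
            intro j hj
            rw [hPdef, Finset.mem_filter] at hj
            calc (∑ e ∈ A, (if e ∈ (p j).edges ∧ Nat.log 2 (p j).length = b then 1 else 0) : ℕ)
                = (A.filter fun e => e ∈ (p j).edges ∧ Nat.log 2 (p j).length = b).card :=
                  (Finset.card_filter _ _).symm
              _ ≤ (p j).edges.toFinset.card := Finset.card_le_card (fun e he => by
                    rw [Finset.mem_filter] at he
                    exact List.mem_toFinset.mpr he.2.1)
              _ ≤ (p j).edges.length := List.toFinset_card_le _
              _ = (p j).length := SimpleGraph.Walk.length_edges _
              _ ≤ 2^(b+1) := by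
                  have h5 := Nat.lt_pow_succ_log_self (b := 2) (by norm_num) (p j).length
                  rw [hj.2.1] at h5
                  omega
          calc (C - k*(Ds+2)) * A.card ≤ ∑ e ∈ A, R.nCongB p b e := h1
            _ = _ := h2
            _ = ∑ j ∈ P, ∑ e ∈ A,
                  (if e ∈ (p j).edges ∧ Nat.log 2 (p j).length = b then 1 else 0) :=
              (Finset.sum_subset (Finset.subset_univ P) h3).symm
            _ ≤ ∑ _j ∈ P, 2^(b+1) := Finset.sum_le_sum h4
            _ = P.card * 2^(b+1) := by rw [Finset.sum_const, smul_eq_mul]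
        have hpoint : ∀ j ∈ P, ∃ e ∈ (pstar j).edges,
            C - k*(Ds+2) + 2^(b+1) ≤ R.nCongB p (Nat.log 2 (pstar j).length) e + Ds + 2 := by
          intro j hj
          rw [hPdef, Finset.mem_filter] at hj
          obtain ⟨-, hlog, e1, he1A, he1j⟩ := hj
          have hge : C - k*(Ds+2) ≤ R.nCong p j := by
            calc C - k*(Ds+2) ≤ R.nCongB p b e1 := hA e1 he1A
              _ ≤ R.nCong p j := by
                  rw [← hlog]
                  exact R.nCongB_le_nCong p he1j
          have hlenj : R.nLen p j = 2^(b+1) - 1 := by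
            unfold RoutingGame.nLen
            rw [hlog]
          have hpceq : R.pcSB p j = R.nCong p j + R.nLen p j := rfl
          obtain ⟨e, he, hle⟩ := hnash_i j
          exact ⟨e, he, by omega⟩
        have hPne : P.Nonempty := by
          have hAne : A.Nonempty := Finset.card_pos.mp (by
            have h6 : (0:ℕ) < 2 ^ k := pow_pos (by norm_num) k
            omega)
          obtain ⟨e1, he1⟩ := hAne
          have hγ1 : 1 ≤ C - k*(Ds+2) := by omega
          have h1 : 0 < R.nCongB p b e1 := lt_of_lt_of_le hγ1 (hA e1 he1)
          obtain ⟨j, hj⟩ := Finset.card_pos.mp h1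
          simp only [Finset.mem_filter] at hj
          refine ⟨j, ?_⟩
          rw [hPdef]
          exact Finset.mem_filter.mpr ⟨Finset.mem_univ _, hj.2.2, e1, he1, hj.2.1⟩
        have hWb : 2^(b+1) ≤ (k+1)*(Ds+2) := by
          obtain ⟨j, hj⟩ := hPne
          obtain ⟨e, _, hle⟩ := hpoint j hj
          have h1 := R.nCongB_le_nC p (Nat.log 2 (pstar j).length) e
          have h2 : (k+1)*(Ds+2) = k*(Ds+2) + (Ds+2) := by ring
          omega
        have hchoice : ∀ j : {x // x ∈ P}, ∃ t : Sym2 V × ℕ,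
            (t.1 ∈ (pstar j.1).edges ∧ t.2 = Nat.log 2 (pstar j.1).length) ∧
            C - k*(Ds+2) + 2^(b+1) ≤ R.nCongB p t.2 t.1 + Ds + 2 := by
          intro j
          obtain ⟨e, he, hle⟩ := hpoint j.1 j.2
          exact ⟨(e, Nat.log 2 (pstar j.1).length), ⟨he, rfl⟩, hle⟩
        choose g hg using hchoice
        have hPT : P.card ≤ Cs * (P.attach.image g).card := by
          rw [← Finset.card_attach (s := P)]
          apply Finset.card_le_mul_card_image
          intro t _
          calc (P.attach.filter fun j => g j = t).card
              ≤ R.nCongB pstar t.2 t.1 := by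
                rw [RoutingGame.nCongB]
                apply Finset.card_le_card_of_injOn (fun j => j.1)
                · intro j hj
                  rw [Finset.mem_coe, Finset.mem_filter] at hj
                  have h1 := (hg j).1
                  rw [hj.2] at h1
                  exact Finset.mem_filter.mpr ⟨Finset.mem_univ _, h1.1, h1.2.symm⟩
                · intro a _ c _ hac
                  exact Subtype.ext hac
            _ ≤ Cs := R.nCongB_le_nC pstar _ _
        have hbucket : ∀ t ∈ P.attach.image g, t.2 ∈ Finset.range (2*lam+1) := by
          intro t ht
          rw [Finset.mem_image] at ht
          obtain ⟨j, _, rfl⟩ := ht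
          rw [Finset.mem_range]
          have h1 := (hg j).1.2
          rw [h1]
          have h2 := R.bucket_le_of_trail lam hnpow hn2 (pstar j.1)
            (R.strat_trail _ _ (hstar j.1))
          omega
        have hfibsum : (P.attach.image g).card
            = ∑ b' ∈ Finset.range (2*lam+1),
                ((P.attach.image g).filter fun t => t.2 = b').card :=
          Finset.card_eq_sum_card_fiberwise hbucket
        obtain ⟨b', _, hb'⟩ := Finset.exists_mem_eq_sup (Finset.range (2*lam+1))
          ⟨0, Finset.mem_range.mpr (by omega)⟩
          (fun b' => ((P.attach.image g).filter fun t => t.2 = b').card)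
        have hfib : (P.attach.image g).card
            ≤ (2*lam+1) * ((P.attach.image g).filter fun t => t.2 = b').card := by
          rw [hfibsum]
          calc ∑ b'' ∈ Finset.range (2*lam+1),
                ((P.attach.image g).filter fun t => t.2 = b'').card
              ≤ (Finset.range (2*lam+1)).card •
                  ((Finset.range (2*lam+1)).sup fun b'' =>
                    ((P.attach.image g).filter fun t => t.2 = b'').card) :=
                Finset.sum_le_card_nsmul _ _ _ (fun x hx => Finset.le_sup (f := fun b'' => ((P.attach.image g).filter fun t => t.2 = b'').card) hx)
            _ = (2*lam+1) * ((Finset.range (2*lam+1)).sup fun b'' =>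
                    ((P.attach.image g).filter fun t => t.2 = b'').card) := by
                rw [Finset.card_range, smul_eq_mul]
            _ = (2*lam+1) * ((P.attach.image g).filter fun t => t.2 = b').card := by
                rw [← hb']
        refine ⟨b', ((P.attach.image g).filter fun t => t.2 = b').image Prod.fst, ?_, ?_⟩
        · have hinj : Set.InjOn Prod.fst
              (↑((P.attach.image g).filter fun t => t.2 = b') : Set (Sym2 V × ℕ)) := by
            intro t1 h1 t2 h2 h12
            simp only [Finset.coe_filter, Set.mem_setOf_eq] at h1 h2
            exact Prod.ext h12 (h1.2.trans h2.2.symm)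
          rw [Finset.card_image_of_injOn hinj]
          have hγbig : 2*(Cs*((2*lam+1)*2^(b+1))) ≤ C - k*(Ds+2) := by
            have h1 : 2*(Cs*((2*lam+1)*2^(b+1))) ≤ 2*Cs*(2*lam+1)*((k+1)*(Ds+2)) := by
              calc 2*(Cs*((2*lam+1)*2^(b+1))) = 2*Cs*(2*lam+1)*(2^(b+1)) := by ring
                _ ≤ 2*Cs*(2*lam+1)*((k+1)*(Ds+2)) := Nat.mul_le_mul_left _ hWb
            exact Nat.le_sub_of_add_le (le_trans (Nat.add_le_add_right h1 _) (le_of_lt hM))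
          have hchain : (Cs*((2*lam+1)*2^(b+1))) * (2 * A.card)
              ≤ (Cs*((2*lam+1)*2^(b+1))) *
                  ((P.attach.image g).filter fun t => t.2 = b').card := by
            calc (Cs*((2*lam+1)*2^(b+1))) * (2 * A.card)
                = (2*(Cs*((2*lam+1)*2^(b+1)))) * A.card := by ring
              _ ≤ (C - k*(Ds+2)) * A.card := Nat.mul_le_mul_right _ hγbig
              _ ≤ P.card * 2^(b+1) := hPcount
              _ ≤ (Cs * (P.attach.image g).card) * 2^(b+1) := Nat.mul_le_mul_right _ hPT
              _ ≤ (Cs * ((2*lam+1) *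
                    (((P.attach.image g).filter fun t => t.2 = b').card))) * 2^(b+1) := by
                  apply Nat.mul_le_mul_right
                  exact Nat.mul_le_mul_left _ hfib
              _ = (Cs*((2*lam+1)*2^(b+1))) *
                    ((P.attach.image g).filter fun t => t.2 = b').card := by ring
          have hpos : 0 < Cs*((2*lam+1)*2^(b+1)) :=
            Nat.mul_pos hCs1 (Nat.mul_pos (by omega) (pow_pos (by norm_num) _))
          have h2A := Nat.le_of_mul_le_mul_left hchain hpos
          calc 2^(k+1) = 2 * 2^k := by ring
            _ ≤ 2 * A.card := by omega
            _ ≤ _ := h2A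
        · intro e he
          rw [Finset.mem_image] at he
          obtain ⟨t, ht, rfl⟩ := he
          rw [Finset.mem_filter] at ht
          obtain ⟨htT, ht2⟩ := ht
          rw [Finset.mem_image] at htT
          obtain ⟨j, _, rfl⟩ := htT
          have h2 := (hg j).2
          rw [ht2] at h2
          have h3 : (k+1)*(Ds+2) = k*(Ds+2) + (Ds+2) := by ring
          omega
    obtain ⟨b, A, hcard, -⟩ := claim (2*lam+1) le_rfl
    have h1 : A.card ≤ Fintype.card (Sym2 V) := Finset.card_le_univ _
    have h2 : Fintype.card (Sym2 V) ≤ Fintype.card V * Fintype.card V :=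
      sym2_card_le (by omega)
    have h3 : Fintype.card V * Fintype.card V ≤ 2^(2*lam) := by
      calc Fintype.card V * Fintype.card V ≤ 2^lam * 2^lam := Nat.mul_le_mul hnpow hnpow
        _ = 2^(2*lam) := by rw [← pow_add]; ring_nf
    have h4 : (2:ℕ)^(2*lam+1) = 2 * 2^(2*lam) := by ring
    have h5 : (0:ℕ) < 2^(2*lam) := pow_pos (by norm_num) _
    omega
  -- conclusion
  have hX1 : 1 ≤ Cs * Ds * lam ^ 2 := by
    have hl2 : 1 ≤ lam ^ 2 := Nat.one_le_pow _ _ (by omega)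
    calc (1:ℕ) = 1 * 1 * 1 := by norm_num
      _ ≤ Cs * Ds * lam ^ 2 := by gcongr
  have hDsX : Ds ≤ Cs * Ds * lam ^ 2 := by
    have hl2 : 1 ≤ lam ^ 2 := Nat.one_le_pow _ _ (by omega)
    calc Ds = 1 * Ds * 1 := by ring
      _ ≤ Cs * Ds * lam ^ 2 := by gcongr
  have hscsb : R.SCSB p = C + R.nD p := rfl
  rw [hscsb]
  nlinarith [hCb, hDp, hDsX, hX1]

end RoutingGame
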